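/- Let χ: ℙ₁ × ℙ₂ → ℙ' be a linear map, g ∈ 𝒢₁, and P₀, P₁, P₂ three distinct points on a line of ℙ₂; set h_i := (g × {P_i})χ for i = 0, 1, 2. Assume g × {P₁} and g × {P₂} are contained in D(χ) and that h₁ and h₂ are skew lines of ℙ' (distinct lines with empty intersection). Then h₀ is a line and any two of h₀, h₁, h₂ are skew; moreover, for every P ∈ g the point (P, P₂)χ is the unique point of h₂ lying in the join {(P, P₁)χ} ∨ h₀, and the resulting map h₁ → h₂ sending (P, P₁)χ to (P, P₂)χ is a projectivity. -/

import Mathlib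

open Set

namespace Segre

variable {P Q : Type*}

/-- Two points are collinear w.r.t. a line set `L` if some line contains both. -/
def Collin (L : Set (Set P)) (x y : P) : Prop := ∃ g ∈ L, x ∈ g ∧ y ∈ g

/-- The union of all lines of `L` through both `x` and `y`; for distinct collinear
points of a semilinear space this is the unique line `xy`. -/
def lineThru (L : Set (Set P)) (x y : P) : Set P := ⋃ g ∈ {g ∈ L | x ∈ g ∧ y ∈ g}, g

/-- The join `M₁ ∨ M₂` of two point sets in a (semi)linear space with line set `L`. -/
def sJoin (L : Set (Set P)) (M₁ M₂ : Set P) : Set P :=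
  M₁ ∪ M₂ ∪
    ⋃ (x ∈ M₁) (y ∈ M₂) (_ : x ≠ y ∧ Collin L x y), lineThru L x y

/-- The (possibly empty) image point set `Xχ` of a single point under a partial map. -/
def ptImg (χ : P → Option Q) (X : P) : Set Q := {y | χ X = some y}

/-- The image `Mχ` of a point set under a partial map. -/
def mapSet (χ : P → Option Q) (M : Set P) : Set Q := ⋃ X ∈ M, ptImg χ X

/-- Axioms (L1) and (L2) for a linear map from the semilinear space with point set `P`
and line set `L` into the projective space with point set `Q` and line set `L'`.
Points in the exceptional set are modelled by the value `none`. -/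
def IsLinMap (L : Set (Set P)) (L' : Set (Set Q)) (χ : P → Option Q) : Prop :=
  (∀ X Y : P, Collin L X Y →
      mapSet χ (sJoin L {X} {Y}) = sJoin L' (ptImg χ X) (ptImg χ Y)) ∧
  (∀ X Y : P, Collin L X Y → X ≠ Y → ptImg χ X = ptImg χ Y →
      ∃ Z ∈ lineThru L X Y, χ Z = none)

/-- A linear map is global if its domain is everything. -/
def IsGlobal (χ : P → Option Q) : Prop := ∀ X, χ X ≠ none

/-- The lines of the product of two semilinear spaces with line sets `L₁`, `L₂`. -/
def prodLines (L₁ : Set (Set P)) (L₂ : Set (Set Q)) : Set (Set (P × Q)) :=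
  {s | (∃ X₁ : P, ∃ g₂ ∈ L₂, s = {X₁} ×ˢ g₂) ∨ ∃ g₁ ∈ L₁, ∃ X₂ : Q, s = g₁ ×ˢ {X₂}}

/-- The lines of the product of two lines `ℓ₁`, `ℓ₂` (viewed as semilinear spaces). -/
def lineProdLines (ℓ₁ : Set P) (ℓ₂ : Set Q) : Set (Set (P × Q)) :=
  {s | (∃ X ∈ ℓ₁, s = {X} ×ˢ ℓ₂) ∨ ∃ Y ∈ ℓ₂, s = ℓ₁ ×ˢ {Y}}

/-- A collineation of a projective (or semilinear) space with line set `L`: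
a bijection such that it and its inverse map lines onto lines. -/
def IsCollineation (L : Set (Set P)) (α : P → P) : Prop :=
  Function.Bijective α ∧ ∀ g : Set P, g ∈ L ↔ α '' g ∈ L

section Projective

variable {K V : Type*} [Field K] [AddCommGroup V] [Module K V]

/-- The point set of the projective line through two (distinct) points of a
projective space `ℙ K V`. -/
def projLineThrough (x y : Projectivization K V) : Set (Projectivization K V) :=
  {z | z.submodule ≤ x.submodule ⊔ y.submodule}

/-- The lines of the projective space `ℙ K V`. -/
def projLines (K V : Type*) [Field K] [AddCommGroup V] [Module K V] :
    Set (Set (Projectivization K V)) :=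
  {g | ∃ x y : Projectivization K V, x ≠ y ∧ g = projLineThrough x y}

/-- The linear span of (representatives of) a set of projective points; its projective
space is the projective closure of the set, whose projective dimension is the vector
rank of this span minus one. -/
def spanOf (M : Set (Projectivization K V)) : Submodule K V := ⨆ x ∈ M, x.submodule

/-- `E` is the point set of a plane (projective dimension 2). -/
def IsPlane (E : Set (Projectivization K V)) : Prop :=
  ∃ W : Submodule K V, Module.finrank K ↥W = 3 ∧ E = {x | x.submodule ≤ W}

/-- The family of points `A` is a projective basis of the subspace of `ℙ K V`
corresponding to the submodule `W`: the representatives are linearly independent and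
span `W`. -/
def IsProjBasisOf {ι : Type*} (A : ι → Projectivization K V) (W : Submodule K V) : Prop :=
  iSupIndep (fun i => (A i).submodule) ∧ (⨆ i, (A i).submodule) = W

end Projective

section PG

variable (F : Type*) [Field F]

/-- The point set of `PG(k, F)`. -/
abbrev PGPt (k : ℕ) := Projectivization F (Fin (k + 1) → F)

/-- The line set of `PG(k, F)`. -/
abbrev PGLines (k : ℕ) := projLines F (Fin (k + 1) → F)

variable (n m : ℕ)

/-- A regular embedding `γ : ℙ₁ × ℙ₂ → ℙ̄`, where `ℙ₁ = PG(n,F)`, `ℙ₂ = PG(m,F)` and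
`ℙ̄ = PG(nm+n+m, F)`: a global injective linear map of the product such that the
projective closure of the image has (projective) dimension `nm+n+m`. -/
def IsRegularEmbedding (γ : PGPt F n × PGPt F m → PGPt F (n * m + n + m)) : Prop :=
  IsLinMap (prodLines (PGLines F n) (PGLines F m)) (PGLines F (n * m + n + m))
      (fun p => some (γ p)) ∧
  Function.Injective γ ∧
  Module.finrank F ↥(spanOf (Set.range γ)) = n * m + n + m + 1

variable {K W : Type*} [Field K] [AddCommGroup W] [Module K W]

/-- Condition (i) on `χ`, w.r.t. the basis `B` of `ℙ₂` and the plane `E ⊆ 𝒫₁`: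
for every `i = 1, …, m` the restriction of `χ` to `E × {B 0, B i}` is global and
of rank greater than `2` (i.e. the vector rank of the span of its image exceeds `3`). -/
def CondI (χ : PGPt F n × PGPt F m → Option (Projectivization K W))
    (B : Fin (m + 1) → PGPt F m) (E : Set (PGPt F n)) : Prop :=
  IsProjBasisOf B (⊤ : Submodule F (Fin (m + 1) → F)) ∧ IsPlane E ∧
  ∀ i : Fin (m + 1), i ≠ 0 →
    (∀ p ∈ E ×ˢ ({B 0, B i} : Set (PGPt F m)), χ p ≠ none) ∧
    3 < Module.rank K ↥(spanOf (mapSet χ (E ×ˢ ({B 0, B i} : Set (PGPt F m)))))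

/-- Condition (ii) on `χ`, w.r.t. the point `A ∈ 𝒫₁`: the image `({A} × 𝒫₂)χ` has
projective dimension `m` (i.e. the vector rank of the span of the image is `m + 1`). -/
def CondII (χ : PGPt F n × PGPt F m → Option (Projectivization K W))
    (A : PGPt F n) : Prop :=
  Module.rank K ↥(spanOf (mapSet χ (({A} : Set (PGPt F n)) ×ˢ (univ : Set (PGPt F m)))))
    = (m : Cardinal) + 1

/-- `ℓ₂` is a special line for the data `χ, γ, φ, α'`: it is a line of `ℙ₂` such that
(a) `({X} × ℓ₂)γφ = ({X} × ℓ₂)αχ` for every `X ∈ 𝒫₁`, and (b) the rank of `αχ`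
restricted to `𝒫₁ × ℓ₂` is greater than `1` (vector rank of the span `> 2`). -/
def SpecialLine (χ : PGPt F n × PGPt F m → Option (Projectivization K W))
    (γ : PGPt F n × PGPt F m → PGPt F (n * m + n + m))
    (φ : PGPt F (n * m + n + m) → Option (Projectivization K W))
    (α' : PGPt F m → PGPt F m) (ℓ₂ : Set (PGPt F m)) : Prop :=
  ℓ₂ ∈ PGLines F m ∧
  (∀ X : PGPt F n,
    mapSet (fun p => φ (γ p)) (({X} : Set (PGPt F n)) ×ˢ ℓ₂) =
      mapSet (fun p : PGPt F n × PGPt F m => χ (p.1, α' p.2))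
        (({X} : Set (PGPt F n)) ×ˢ ℓ₂)) ∧
  2 < Module.rank K ↥(spanOf (mapSet (fun p : PGPt F n × PGPt F m => χ (p.1, α' p.2))
        ((univ : Set (PGPt F n)) ×ˢ ℓ₂)))

end PG

end Segre

namespace Seventeen

open Segre Set Projectivization Module

variable {P Q : Type*}

lemma mem_mapSet {χ : P → Option Q} {M : Set P} {u : Q} :
    u ∈ mapSet χ M ↔ ∃ X ∈ M, χ X = some u := by
  simp [mapSet, ptImg]

lemma mem_lineThru_of_collin {L : Set (Set P)} {X Y : P} (h : Collin L X Y) :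
    X ∈ lineThru L X Y ∧ Y ∈ lineThru L X Y := by
  obtain ⟨g, hg, hX, hY⟩ := h
  constructor <;> exact Set.mem_biUnion ⟨hg, hX, hY⟩ ‹_›

lemma lineThru_subset {L : Set (Set P)} {X Y : P} {s : Set P}
    (huniq : ∀ g ∈ L, X ∈ g → Y ∈ g → g = s) : lineThru L X Y ⊆ s := by
  intro z hz
  obtain ⟨g, hg, hzg⟩ := Set.mem_iUnion₂.1 hz
  exact (huniq g hg.1 hg.2.1 hg.2.2) ▸ hzg

lemma sJoin_single_single {L : Set (Set P)} {X Y : P} (hne : X ≠ Y) (hcol : Collin L X Y) :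
    sJoin L {X} {Y} = lineThru L X Y := by
  obtain ⟨hX, hY⟩ := mem_lineThru_of_collin hcol
  apply Set.eq_of_subset_of_subset
  · rintro z (((rfl : z = X) | (rfl : z = Y)) | hz)
    · exact hX
    · exact hY
    · simp only [Set.mem_iUnion, Set.mem_singleton_iff] at hz
      obtain ⟨x, rfl, y, rfl, _, hz⟩ := hz
      exact hz
  · intro z hz
    refine Or.inr ?_
    simp only [Set.mem_iUnion, Set.mem_singleton_iff]
    exact ⟨X, rfl, Y, rfl, ⟨hne, hcol⟩, hz⟩

lemma sJoin_single_empty {L : Set (Set Q)} (a : Q) : sJoin L {a} (∅ : Set Q) = {a} := by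
  simp [sJoin]

lemma sJoin_single_self {L : Set (Set Q)} (a : Q) : sJoin L {a} {a} = {a} := by
  ext z
  simp only [sJoin, Set.mem_union, Set.union_self, Set.mem_iUnion, Set.mem_singleton_iff]
  constructor
  · rintro (h | ⟨x, rfl, y, rfl, ⟨hne, -⟩, -⟩)
    · exact h
    · exact absurd rfl hne
  · exact fun h => Or.inl h

section Proj

variable {K W : Type*} [Field K] [AddCommGroup W] [Module K W]

lemma mem_projLineThrough_left (x y : Projectivization K W) : x ∈ projLineThrough x y :=
  show x.submodule ≤ _ from le_sup_left

lemma mem_projLineThrough_right (x y : Projectivization K W) : y ∈ projLineThrough x y :=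
  show y.submodule ≤ _ from le_sup_right

lemma projLineThrough_mem {x y : Projectivization K W} (h : x ≠ y) :
    projLineThrough x y ∈ projLines K W := ⟨x, y, h, rfl⟩

lemma submodule_ne {x y : Projectivization K W} (h : x ≠ y) : x.submodule ≠ y.submodule :=
  fun e => h (Projectivization.submodule_injective e)

lemma inf_eq_bot_of_ne {x y : Projectivization K W} (h : x ≠ y) :
    x.submodule ⊓ y.submodule = ⊥ := by
  by_contra hne
  obtain ⟨v, hv, hv0⟩ := Submodule.exists_mem_ne_zero_of_ne_bot hne
  have h1 : (1 : ℕ) ≤ finrank K ↥(x.submodule ⊓ y.submodule) := by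
    have : FiniteDimensional K ↥(x.submodule ⊓ y.submodule) :=
      Submodule.finiteDimensional_of_le (inf_le_left (b := y.submodule))
    rw [Nat.one_le_iff_ne_zero]
    intro h0
    rw [Submodule.finrank_eq_zero] at h0
    rw [h0] at hv
    exact hv0 hv
  have ex : x.submodule ⊓ y.submodule = x.submodule :=
    Submodule.eq_of_le_of_finrank_le inf_le_left (x.finrank_submodule ▸ h1)
  have ey : x.submodule ⊓ y.submodule = y.submodule :=
    Submodule.eq_of_le_of_finrank_le inf_le_right (y.finrank_submodule ▸ h1)
  exact submodule_ne h (ex ▸ ey)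

lemma finrank_sup_eq_two {x y : Projectivization K W} (h : x ≠ y) :
    finrank K ↥(x.submodule ⊔ y.submodule) = 2 := by
  have := Submodule.finrank_sup_add_finrank_inf_eq x.submodule y.submodule
  rw [inf_eq_bot_of_ne h, finrank_bot, x.finrank_submodule, y.finrank_submodule] at this
  omega

instance sup_findim (x y : Projectivization K W) :
    FiniteDimensional K ↥(x.submodule ⊔ y.submodule) :=
  Submodule.finiteDimensional_sup _ _

/-- Uniqueness of the projective line through two distinct points. -/
lemma line_eq_of_two_mem {h : Set (Projectivization K W)} (hh : h ∈ projLines K W)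
    {a b : Projectivization K W} (hab : a ≠ b) (ha : a ∈ h) (hb : b ∈ h) :
    h = projLineThrough a b := by
  obtain ⟨x, y, hxy, rfl⟩ := hh
  have hle : a.submodule ⊔ b.submodule ≤ x.submodule ⊔ y.submodule := sup_le ha hb
  have heq : a.submodule ⊔ b.submodule = x.submodule ⊔ y.submodule :=
    Submodule.eq_of_le_of_finrank_le hle (by rw [finrank_sup_eq_two hxy, finrank_sup_eq_two hab])
  unfold projLineThrough
  ext z
  rw [Set.mem_setOf_eq, Set.mem_setOf_eq, heq]

lemma collin_proj {a b : Projectivization K W} (hab : a ≠ b) : Collin (projLines K W) a b :=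
  ⟨projLineThrough a b, projLineThrough_mem hab, mem_projLineThrough_left a b,
    mem_projLineThrough_right a b⟩

lemma lineThru_proj {a b : Projectivization K W} (hab : a ≠ b) :
    lineThru (projLines K W) a b = projLineThrough a b := by
  apply Set.eq_of_subset_of_subset
  · exact lineThru_subset fun g hg hag hbg => line_eq_of_two_mem hg hab hag hbg
  · intro z hz
    exact Set.mem_biUnion ⟨projLineThrough_mem hab, mem_projLineThrough_left a b,
      mem_projLineThrough_right a b⟩ hz

lemma sJoin_proj_points {a b : Projectivization K W} (hab : a ≠ b) :
    sJoin (projLines K W) {a} {b} = projLineThrough a b := by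
  rw [sJoin_single_single hab (collin_proj hab), lineThru_proj hab]

end Proj

end Seventeen

namespace Seventeen

open Segre Set Projectivization Module

section Proj2

variable {K W : Type*} [Field K] [AddCommGroup W] [Module K W]

lemma ptImg_some {P : Type*} {χ : P → Option (Projectivization K W)} {X : P}
    {a : Projectivization K W} (h : χ X = some a) : ptImg χ X = {a} := by
  ext y; simp only [ptImg, Set.mem_setOf_eq, h, Option.some_inj, Set.mem_singleton_iff, eq_comm]

lemma ptImg_none {P : Type*} {χ : P → Option (Projectivization K W)} {X : P}
    (h : χ X = none) : ptImg χ X = ∅ := by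
  ext y; simp [ptImg, h]

lemma submodule_ne_bot (x : Projectivization K W) : x.submodule ≠ ⊥ := by
  intro h
  have := x.finrank_submodule
  rw [h, finrank_bot] at this
  exact absurd this one_ne_zero.symm

lemma finrank_sup_le (A B : Submodule K W) [FiniteDimensional K A] [FiniteDimensional K B] :
    finrank K ↥(A ⊔ B) ≤ finrank K A + finrank K B := by
  have := Submodule.finrank_sup_add_finrank_inf_eq A B
  omega

lemma eq_of_two_points_le {x y : Projectivization K W} (hxy : x ≠ y)
    {X M : Submodule K W} [FiniteDimensional K M] (hXM : X ≤ M) (hM : finrank K M ≤ 2)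
    (hx : x.submodule ≤ X) (hy : y.submodule ≤ X) : X = M := by
  haveI : FiniteDimensional K X := Submodule.finiteDimensional_of_le hXM
  have h2 : (2 : ℕ) ≤ finrank K X := by
    have := Submodule.finrank_mono (sup_le hx hy : x.submodule ⊔ y.submodule ≤ X)
    rwa [finrank_sup_eq_two hxy] at this
  exact Submodule.eq_of_le_of_finrank_le hXM (le_trans hM h2)

lemma inf_eq_bot_of_disjoint_lines {A B : Submodule K W}
    (h : {z : Projectivization K W | z.submodule ≤ A} ∩ {z | z.submodule ≤ B} = ∅) :
    A ⊓ B = ⊥ := by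
  by_contra hne
  obtain ⟨v, hv, hv0⟩ := Submodule.exists_mem_ne_zero_of_ne_bot hne
  have hz : Projectivization.mk K v hv0 ∈
      {z : Projectivization K W | z.submodule ≤ A} ∩ {z | z.submodule ≤ B} := by
    constructor
    · show (Projectivization.mk K v hv0).submodule ≤ A
      rw [Projectivization.submodule_mk]
      exact (Submodule.span_singleton_le_iff_mem _ _).2 hv.1
    · show (Projectivization.mk K v hv0).submodule ≤ B
      rw [Projectivization.submodule_mk]
      exact (Submodule.span_singleton_le_iff_mem _ _).2 hv.2
  rw [h] at hz
  exact hz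

end Proj2

section Prod

variable {F V₁ V₂ : Type*} [Field F] [AddCommGroup V₁] [Module F V₁]
  [AddCommGroup V₂] [Module F V₂]

local notation "ℙ₁" => Projectivization F V₁
local notation "ℙ₂" => Projectivization F V₂
local notation "L" => prodLines (projLines F V₁) (projLines F V₂)

lemma vert_mem {g' : Set ℙ₂} (hg' : g' ∈ projLines F V₂) (P : ℙ₁) :
    ({P} : Set ℙ₁) ×ˢ g' ∈ L := Or.inl ⟨P, g', hg', rfl⟩

lemma horiz_mem {g : Set ℙ₁} (hg : g ∈ projLines F V₁) (z : ℙ₂) :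
    g ×ˢ ({z} : Set ℙ₂) ∈ L := Or.inr ⟨g, hg, z, rfl⟩

lemma collin_vert {g' : Set ℙ₂} (hg' : g' ∈ projLines F V₂) (P : ℙ₁) {z z' : ℙ₂}
    (hz : z ∈ g') (hz' : z' ∈ g') : Collin L (P, z) (P, z') :=
  ⟨({P} : Set ℙ₁) ×ˢ g', vert_mem hg' P, ⟨rfl, hz⟩, ⟨rfl, hz'⟩⟩

lemma collin_horiz {g : Set ℙ₁} (hg : g ∈ projLines F V₁) (z : ℙ₂) {P Q : ℙ₁}
    (hP : P ∈ g) (hQ : Q ∈ g) : Collin L (P, z) (Q, z) :=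
  ⟨g ×ˢ ({z} : Set ℙ₂), horiz_mem hg z, ⟨hP, rfl⟩, ⟨hQ, rfl⟩⟩

lemma lineThru_vert {g' : Set ℙ₂} (hg' : g' ∈ projLines F V₂) (P : ℙ₁) {z z' : ℙ₂}
    (hz : z ∈ g') (hz' : z' ∈ g') (hne : z ≠ z') :
    lineThru L (P, z) (P, z') = ({P} : Set ℙ₁) ×ˢ g' := by
  apply Set.eq_of_subset_of_subset
  · apply lineThru_subset
    rintro s (⟨X₁, g₂, hg₂, rfl⟩ | ⟨g₁, hg₁, X₂, rfl⟩) h1 h2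
    · obtain ⟨(h1a : _ = X₁), h1b⟩ := h1
      obtain ⟨-, h2b⟩ := h2
      have e2 : g₂ = projLineThrough z z' := line_eq_of_two_mem hg₂ hne h1b h2b
      have e2' : g' = projLineThrough z z' := line_eq_of_two_mem hg' hne hz hz'
      rw [e2, ← e2', ← h1a]
    · obtain ⟨-, (h1b : z = X₂)⟩ := h1
      obtain ⟨-, (h2b : z' = X₂)⟩ := h2
      exact absurd (h1b.trans h2b.symm) hne
  · intro w hw
    exact Set.mem_biUnion ⟨vert_mem hg' P, ⟨rfl, hz⟩, ⟨rfl, hz'⟩⟩ hw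

lemma lineThru_horiz {g : Set ℙ₁} (hg : g ∈ projLines F V₁) (z : ℙ₂) {P Q : ℙ₁}
    (hP : P ∈ g) (hQ : Q ∈ g) (hne : P ≠ Q) :
    lineThru L (P, z) (Q, z) = g ×ˢ ({z} : Set ℙ₂) := by
  apply Set.eq_of_subset_of_subset
  · apply lineThru_subset
    rintro s (⟨X₁, g₂, hg₂, rfl⟩ | ⟨g₁, hg₁, X₂, rfl⟩) h1 h2
    · obtain ⟨(h1a : P = X₁), -⟩ := h1
      obtain ⟨(h2a : Q = X₁), -⟩ := h2
      exact absurd (h1a.trans h2a.symm) hne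
    · obtain ⟨h1a, (h1b : z = X₂)⟩ := h1
      obtain ⟨h2a, -⟩ := h2
      have e1 : g₁ = projLineThrough P Q := line_eq_of_two_mem hg₁ hne h1a h2a
      have e1' : g = projLineThrough P Q := line_eq_of_two_mem hg hne hP hQ
      rw [e1, ← e1', ← h1b]
  · intro w hw
    exact Set.mem_biUnion ⟨horiz_mem hg z, ⟨hP, rfl⟩, ⟨hQ, rfl⟩⟩ hw

end Prod

end Seventeen

namespace Seventeen

open Segre Set Projectivization Module

lemma mem_sJoin_single_left {Q : Type*} {L : Set (Set Q)} {a : Q} {H : Set Q} {z : Q} :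
    z ∈ sJoin L {a} H ↔
      z = a ∨ z ∈ H ∨ ∃ b ∈ H, a ≠ b ∧ Collin L a b ∧ z ∈ lineThru L a b := by
  unfold sJoin
  simp only [Set.mem_union, Set.mem_iUnion, Set.mem_singleton_iff, exists_prop]
  constructor
  · rintro ((rfl | h) | ⟨x, rfl, b, hbH, ⟨hne, hcol⟩, hz⟩)
    · exact Or.inl rfl
    · exact Or.inr (Or.inl h)
    · exact Or.inr (Or.inr ⟨b, hbH, hne, hcol, hz⟩)
  · rintro (rfl | h | ⟨b, hbH, hne, hcol, hz⟩)
    · exact Or.inl (Or.inl rfl)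
    · exact Or.inl (Or.inr h)
    · exact Or.inr ⟨a, rfl, b, hbH, ⟨hne, hcol⟩, hz⟩

end Seventeen

open Segre Set Seventeen Projectivization Module in
/-- Proposition `esistefi`, case 1: if `h₁` and `h₂` are skew lines,
then `h₀` is a line, any two of `h₀, h₁, h₂` are skew, `(P, P₂)χ` is the unique point of
`h₂` in `{(P, P₁)χ} ∨ h₀`, and the map `(P, P₁)χ ↦ (P, P₂)χ` is a projectivity. -/
theorem statement_17 (F : Type*) [Field F] (n m : ℕ) (hn : 2 ≤ n) (hm : 1 ≤ m)
    (K W : Type*) [Field K] [AddCommGroup W] [Module K W]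
    (χ : PGPt F n × PGPt F m → Option (Projectivization K W))
    (hχ : IsLinMap (prodLines (PGLines F n) (PGLines F m)) (projLines K W) χ)
    (g : Set (PGPt F n)) (hg : g ∈ PGLines F n)
    (g' : Set (PGPt F m)) (hg' : g' ∈ PGLines F m)
    (P₀ P₁ P₂ : PGPt F m) (h0 : P₀ ∈ g') (h1 : P₁ ∈ g') (h2 : P₂ ∈ g')
    (d01 : P₀ ≠ P₁) (d02 : P₀ ≠ P₂) (d12 : P₁ ≠ P₂)
    (hdom1 : ∀ q ∈ g ×ˢ ({P₁} : Set (PGPt F m)), χ q ≠ none)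
    (hdom2 : ∀ q ∈ g ×ˢ ({P₂} : Set (PGPt F m)), χ q ≠ none)
    (hh1 : mapSet χ (g ×ˢ ({P₁} : Set (PGPt F m))) ∈ projLines K W)
    (hh2 : mapSet χ (g ×ˢ ({P₂} : Set (PGPt F m))) ∈ projLines K W)
    (hne : mapSet χ (g ×ˢ ({P₁} : Set (PGPt F m)))
      ≠ mapSet χ (g ×ˢ ({P₂} : Set (PGPt F m))))
    (hskew : mapSet χ (g ×ˢ ({P₁} : Set (PGPt F m))) ∩
      mapSet χ (g ×ˢ ({P₂} : Set (PGPt F m))) = ∅) :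
    mapSet χ (g ×ˢ ({P₀} : Set (PGPt F m))) ∈ projLines K W ∧
    (mapSet χ (g ×ˢ ({P₀} : Set (PGPt F m))) ∩
        mapSet χ (g ×ˢ ({P₁} : Set (PGPt F m))) = ∅ ∧
      mapSet χ (g ×ˢ ({P₀} : Set (PGPt F m))) ≠ mapSet χ (g ×ˢ ({P₁} : Set (PGPt F m)))) ∧
    (mapSet χ (g ×ˢ ({P₀} : Set (PGPt F m))) ∩
        mapSet χ (g ×ˢ ({P₂} : Set (PGPt F m))) = ∅ ∧
      mapSet χ (g ×ˢ ({P₀} : Set (PGPt F m))) ≠ mapSet χ (g ×ˢ ({P₂} : Set (PGPt F m)))) ∧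
    (∀ P ∈ g, ∀ y₁ y₂ : Projectivization K W,
      χ (P, P₁) = some y₁ → χ (P, P₂) = some y₂ →
      mapSet χ (g ×ˢ ({P₂} : Set (PGPt F m))) ∩
        sJoin (projLines K W) ({y₁} : Set (Projectivization K W))
          (mapSet χ (g ×ˢ ({P₀} : Set (PGPt F m)))) = {y₂}) ∧
    ∃ T : W →ₗ[K] W,
      Submodule.map T (spanOf (mapSet χ (g ×ˢ ({P₁} : Set (PGPt F m)))))
        = spanOf (mapSet χ (g ×ˢ ({P₂} : Set (PGPt F m)))) ∧
      ∀ P ∈ g, ∀ y₁ y₂ : Projectivization K W,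
        χ (P, P₁) = some y₁ → χ (P, P₂) = some y₂ →
        Submodule.map T y₁.submodule = y₂.submodule := by
  classical
  obtain ⟨hL1, hL2⟩ := hχ
  -- two distinct base points of g
  obtain ⟨xg, yg, hxyg, hgeq⟩ := hg
  have hxg : xg ∈ g := by rw [hgeq]; exact mem_projLineThrough_left xg yg
  have hyg : yg ∈ g := by rw [hgeq]; exact mem_projLineThrough_right xg yg
  have hgmem : g ∈ PGLines F n := ⟨xg, yg, hxyg, hgeq⟩
  -- (L1) along fiber lines
  have key1 : ∀ (R : PGPt F n) {z z' : PGPt F m}, z ∈ g' → z' ∈ g' → z ≠ z' →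
      mapSet χ (({R} : Set (PGPt F n)) ×ˢ g')
        = sJoin (projLines K W) (ptImg χ (R, z)) (ptImg χ (R, z')) := by
    intro R z z' hz hz' hzz'
    have hcol := collin_vert hg' R hz hz'
    have hpe : (R, z) ≠ (R, z') := fun h => hzz' (congrArg Prod.snd h)
    have := hL1 (R, z) (R, z') hcol
    rwa [sJoin_single_single hpe hcol, lineThru_vert hg' R hz hz' hzz'] at this
  -- (L1) along base lines
  have key2 : ∀ (z : PGPt F m) {R S : PGPt F n}, R ∈ g → S ∈ g → R ≠ S →
      mapSet χ (g ×ˢ ({z} : Set (PGPt F m)))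
        = sJoin (projLines K W) (ptImg χ (R, z)) (ptImg χ (S, z)) := by
    intro z R S hR hS hRS
    have hcol := collin_horiz hgmem z hR hS
    have hpe : (R, z) ≠ (S, z) := fun h => hRS (congrArg Prod.fst h)
    have := hL1 (R, z) (S, z) hcol
    rwa [sJoin_single_single hpe hcol, lineThru_horiz hgmem z hR hS hRS] at this
  -- per-fiber structure
  have fib : ∀ R ∈ g, ∃ b₀ b₁ b₂ : Projectivization K W,
      χ (R, P₀) = some b₀ ∧ χ (R, P₁) = some b₁ ∧ χ (R, P₂) = some b₂ ∧
      b₁ ≠ b₂ ∧ b₀ ≠ b₁ ∧ b₀ ≠ b₂ ∧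
      b₀.submodule ≤ b₁.submodule ⊔ b₂.submodule ∧
      b₂.submodule ≤ b₁.submodule ⊔ b₀.submodule := by
    intro R hR
    obtain ⟨b₁, hb₁⟩ := Option.ne_none_iff_exists'.1 (hdom1 (R, P₁) ⟨hR, rfl⟩)
    obtain ⟨b₂, hb₂⟩ := Option.ne_none_iff_exists'.1 (hdom2 (R, P₂) ⟨hR, rfl⟩)
    have hb₁m : b₁ ∈ mapSet χ (g ×ˢ ({P₁} : Set (PGPt F m))) :=
      mem_mapSet.2 ⟨(R, P₁), ⟨hR, rfl⟩, hb₁⟩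
    have hb₂m : b₂ ∈ mapSet χ (g ×ˢ ({P₂} : Set (PGPt F m))) :=
      mem_mapSet.2 ⟨(R, P₂), ⟨hR, rfl⟩, hb₂⟩
    have hb12 : b₁ ≠ b₂ := by
      intro h
      have : b₁ ∈ mapSet χ (g ×ˢ ({P₁} : Set (PGPt F m))) ∩
          mapSet χ (g ×ˢ ({P₂} : Set (PGPt F m))) := ⟨hb₁m, h ▸ hb₂m⟩
      rw [hskew] at this
      exact this
    have hm : mapSet χ (({R} : Set (PGPt F n)) ×ˢ g') = projLineThrough b₁ b₂ := by
      rw [key1 R h1 h2 d12, ptImg_some hb₁, ptImg_some hb₂, sJoin_proj_points hb12]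
    have hb₂mem : b₂ ∈ mapSet χ (({R} : Set (PGPt F n)) ×ˢ g') := by
      rw [hm]; exact mem_projLineThrough_right b₁ b₂
    have tot : ∀ w ∈ g', χ (R, w) ≠ none := by
      intro w hw hnone
      by_cases hwP1 : w = P₁
      · exact hdom1 (R, P₁) ⟨hR, rfl⟩ (by rwa [hwP1] at hnone)
      · have hk := key1 R h1 hw (fun e => hwP1 e.symm)
        rw [ptImg_some hb₁, ptImg_none hnone, sJoin_single_empty] at hk
        rw [hk] at hb₂mem
        exact hb12 hb₂mem.symm
    obtain ⟨b₀, hb₀⟩ := Option.ne_none_iff_exists'.1 (tot P₀ h0)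
    have hb01 : b₀ ≠ b₁ := by
      intro h
      have hk := key1 R h1 h0 d01.symm
      rw [ptImg_some hb₁, ptImg_some hb₀, h, sJoin_single_self] at hk
      rw [hk] at hb₂mem
      exact hb12 hb₂mem.symm
    have hm' : mapSet χ (({R} : Set (PGPt F n)) ×ˢ g') = projLineThrough b₁ b₀ := by
      rw [key1 R h1 h0 d01.symm, ptImg_some hb₁, ptImg_some hb₀,
        sJoin_proj_points (Ne.symm hb01)]
    have hb02 : b₀ ≠ b₂ := by
      intro h
      obtain ⟨Z, hZmem, hZ⟩ := hL2 (R, P₀) (R, P₂) (collin_vert hg' R h0 h2)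
        (fun e => d02 (congrArg Prod.snd e))
        (by rw [ptImg_some hb₀, ptImg_some hb₂, h])
      rw [lineThru_vert hg' R h0 h2 d02] at hZmem
      obtain ⟨hZ1, hZ2⟩ := hZmem
      have : Z = (R, Z.2) := Prod.ext hZ1 rfl
      exact tot Z.2 hZ2 (by rwa [this] at hZ)
    have hle1 : b₀.submodule ≤ b₁.submodule ⊔ b₂.submodule := by
      have hb₀mem : b₀ ∈ mapSet χ (({R} : Set (PGPt F n)) ×ˢ g') := by
        rw [hm']; exact mem_projLineThrough_right b₁ b₀
      rw [hm] at hb₀mem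
      exact hb₀mem
    have hle2 : b₂.submodule ≤ b₁.submodule ⊔ b₀.submodule := by
      have hb₂mem' : b₂ ∈ mapSet χ (({R} : Set (PGPt F n)) ×ˢ g') := by
        rw [hm]; exact mem_projLineThrough_right b₁ b₂
      rw [hm'] at hb₂mem'
      exact hb₂mem'
    exact ⟨b₀, b₁, b₂, hb₀, hb₁, hb₂, hb12, hb01, hb02, hle1, hle2⟩
  -- injectivity across fibers at P₁ and P₂
  have inj1 : ∀ {R S : PGPt F n}, R ∈ g → S ∈ g → R ≠ S →
      ∀ {a b : Projectivization K W}, χ (R, P₁) = some a → χ (S, P₁) = some b → a ≠ b := by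
    intro R S hR hS hRS a b ha hb hab
    obtain ⟨Z, hZmem, hZ⟩ := hL2 (R, P₁) (S, P₁) (collin_horiz hgmem P₁ hR hS)
      (fun e => hRS (congrArg Prod.fst e))
      (by rw [ptImg_some ha, ptImg_some hb, hab])
    rw [lineThru_horiz hgmem P₁ hR hS hRS] at hZmem
    exact hdom1 Z hZmem hZ
  have inj2 : ∀ {R S : PGPt F n}, R ∈ g → S ∈ g → R ≠ S →
      ∀ {a b : Projectivization K W}, χ (R, P₂) = some a → χ (S, P₂) = some b → a ≠ b := by
    intro R S hR hS hRS a b ha hb hab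
    obtain ⟨Z, hZmem, hZ⟩ := hL2 (R, P₂) (S, P₂) (collin_horiz hgmem P₂ hR hS)
      (fun e => hRS (congrArg Prod.fst e))
      (by rw [ptImg_some ha, ptImg_some hb, hab])
    rw [lineThru_horiz hgmem P₂ hR hS hRS] at hZmem
    exact hdom2 Z hZmem hZ
  -- injectivity across fibers at P₀
  have inj0 : ∀ {R S : PGPt F n}, R ∈ g → S ∈ g → R ≠ S →
      ∀ {a b : Projectivization K W}, χ (R, P₀) = some a → χ (S, P₀) = some b → a ≠ b := by
    intro R S hR hS hRS a b ha hb heq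
    obtain ⟨a₀, a₁, a₂, ha₀, ha₁, ha₂, -, -, -, haleA, -⟩ := fib R hR
    obtain ⟨c₀, c₁, c₂, hc₀, hc₁, hc₂, -, -, -, hcleA, -⟩ := fib S hS
    have ea : a = a₀ := Option.some_injective _ (ha.symm.trans ha₀)
    have ec : b = c₀ := Option.some_injective _ (hb.symm.trans hc₀)
    have e0 : a₀ = c₀ := by rw [← ea, ← ec]; exact heq
    have hcleA' : a₀.submodule ≤ c₁.submodule ⊔ c₂.submodule := by rw [e0]; exact hcleA
    have hU1 : mapSet χ (g ×ˢ ({P₁} : Set (PGPt F m))) = projLineThrough a₁ c₁ := by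
      rw [key2 P₁ hR hS hRS, ptImg_some ha₁, ptImg_some hc₁,
        sJoin_proj_points (inj1 hR hS hRS ha₁ hc₁)]
    have hU2 : mapSet χ (g ×ˢ ({P₂} : Set (PGPt F m))) = projLineThrough a₂ c₂ := by
      rw [key2 P₂ hR hS hRS, ptImg_some ha₂, ptImg_some hc₂,
        sJoin_proj_points (inj2 hR hS hRS ha₂ hc₂)]
    have hdisj : (a₁.submodule ⊔ c₁.submodule) ⊓ (a₂.submodule ⊔ c₂.submodule) = ⊥ := by
      apply inf_eq_bot_of_disjoint_lines
      have e1 : {z : Projectivization K W | z.submodule ≤ a₁.submodule ⊔ c₁.submodule}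
          = projLineThrough a₁ c₁ := rfl
      have e2 : {z : Projectivization K W | z.submodule ≤ a₂.submodule ⊔ c₂.submodule}
          = projLineThrough a₂ c₂ := rfl
      rw [e1, e2, ← hU1, ← hU2]
      exact hskew
    have hfin4 : finrank K
        ↥((a₁.submodule ⊔ c₁.submodule) ⊔ (a₂.submodule ⊔ c₂.submodule)) = 4 := by
      have h := Submodule.finrank_sup_add_finrank_inf_eq
        (a₁.submodule ⊔ c₁.submodule) (a₂.submodule ⊔ c₂.submodule)
      rw [hdisj, finrank_bot, finrank_sup_eq_two (inj1 hR hS hRS ha₁ hc₁),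
        finrank_sup_eq_two (inj2 hR hS hRS ha₂ hc₂)] at h
      omega
    have frMR : finrank K ↥(a₁.submodule ⊔ a₂.submodule) ≤ 2 := by
      have h := finrank_sup_le a₁.submodule a₂.submodule
      rw [a₁.finrank_submodule, a₂.finrank_submodule] at h
      omega
    have frMS : finrank K ↥(c₁.submodule ⊔ c₂.submodule) ≤ 2 := by
      have h := finrank_sup_le c₁.submodule c₂.submodule
      rw [c₁.finrank_submodule, c₂.finrank_submodule] at h
      omega
    have h1dim : (1 : ℕ) ≤
        finrank K ↥((a₁.submodule ⊔ a₂.submodule) ⊓ (c₁.submodule ⊔ c₂.submodule)) := by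
      haveI : FiniteDimensional K
          ↥((a₁.submodule ⊔ a₂.submodule) ⊓ (c₁.submodule ⊔ c₂.submodule)) :=
        Submodule.finiteDimensional_of_le inf_le_left
      have hle : a₀.submodule ≤
          (a₁.submodule ⊔ a₂.submodule) ⊓ (c₁.submodule ⊔ c₂.submodule) :=
        le_inf haleA hcleA'
      have := Submodule.finrank_mono hle
      rwa [a₀.finrank_submodule] at this
    haveI : FiniteDimensional K
        ↥((a₁.submodule ⊔ a₂.submodule) ⊔ (c₁.submodule ⊔ c₂.submodule)) :=
      Submodule.finiteDimensional_sup _ _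
    have hsup3 : finrank K
        ↥((a₁.submodule ⊔ a₂.submodule) ⊔ (c₁.submodule ⊔ c₂.submodule)) ≤ 3 := by
      have h := Submodule.finrank_sup_add_finrank_inf_eq
        (a₁.submodule ⊔ a₂.submodule) (c₁.submodule ⊔ c₂.submodule)
      omega
    have hge4 : (4 : ℕ) ≤ finrank K
        ↥((a₁.submodule ⊔ a₂.submodule) ⊔ (c₁.submodule ⊔ c₂.submodule)) := by
      rw [← hfin4]
      apply Submodule.finrank_mono
      apply sup_le (sup_le ?_ ?_) (sup_le ?_ ?_)
      · exact le_trans le_sup_left le_sup_left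
      · exact le_trans le_sup_left le_sup_right
      · exact le_trans le_sup_right le_sup_left
      · exact le_trans le_sup_right le_sup_right
    omega
  -- fixed witnesses at the two base points
  obtain ⟨a₀, a₁, a₂, ha₀, ha₁, ha₂, ha12, ha01, ha02, haleA, haleB⟩ := fib xg hxg
  obtain ⟨c₀, c₁, c₂, hc₀, hc₁, hc₂, hc12, hc01, hc02, hcleA, hcleB⟩ := fib yg hyg
  have ne1 : a₁ ≠ c₁ := inj1 hxg hyg hxyg ha₁ hc₁
  have ne2 : a₂ ≠ c₂ := inj2 hxg hyg hxyg ha₂ hc₂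
  have ne0 : a₀ ≠ c₀ := inj0 hxg hyg hxyg ha₀ hc₀
  have h1eq : mapSet χ (g ×ˢ ({P₁} : Set (PGPt F m))) = projLineThrough a₁ c₁ := by
    rw [key2 P₁ hxg hyg hxyg, ptImg_some ha₁, ptImg_some hc₁, sJoin_proj_points ne1]
  have h2eq : mapSet χ (g ×ˢ ({P₂} : Set (PGPt F m))) = projLineThrough a₂ c₂ := by
    rw [key2 P₂ hxg hyg hxyg, ptImg_some ha₂, ptImg_some hc₂, sJoin_proj_points ne2]
  have h0eq : mapSet χ (g ×ˢ ({P₀} : Set (PGPt F m))) = projLineThrough a₀ c₀ := by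
    rw [key2 P₀ hxg hyg hxyg, ptImg_some ha₀, ptImg_some hc₀, sJoin_proj_points ne0]
  -- skew line intersections with the new line
  have int01 : mapSet χ (g ×ˢ ({P₀} : Set (PGPt F m))) ∩
      mapSet χ (g ×ˢ ({P₁} : Set (PGPt F m))) = ∅ := by
    rw [Set.eq_empty_iff_forall_notMem]
    rintro u ⟨hu0, hu1⟩
    obtain ⟨X, hXmem, hXval⟩ := mem_mapSet.1 hu0
    obtain ⟨hXg, hXsnd⟩ := hXmem
    obtain ⟨b₀, b₁, b₂, hb₀, hb₁, hb₂, hb12, hb01, hb02, hbleA, hbleB⟩ := fib X.1 hXg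
    have hXeq : X = (X.1, P₀) := Prod.ext rfl hXsnd
    rw [hXeq] at hXval
    have hub : u = b₀ := Option.some_injective _ (hXval.symm.trans hb₀)
    subst hub
    have hu1' : u.submodule ≤ a₁.submodule ⊔ c₁.submodule := by
      rw [h1eq] at hu1; exact hu1
    have hb₁' : b₁.submodule ≤ a₁.submodule ⊔ c₁.submodule := by
      have hmem : b₁ ∈ mapSet χ (g ×ˢ ({P₁} : Set (PGPt F m))) :=
        mem_mapSet.2 ⟨(X.1, P₁), ⟨hXg, rfl⟩, hb₁⟩
      rw [h1eq] at hmem; exact hmem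
    have heqM : (a₁.submodule ⊔ c₁.submodule) ⊓ (b₁.submodule ⊔ b₂.submodule)
        = b₁.submodule ⊔ b₂.submodule :=
      eq_of_two_points_le hb01 inf_le_right (finrank_sup_eq_two hb12).le
        (le_inf hu1' hbleA) (le_inf hb₁' le_sup_left)
    have hb₂U1 : b₂.submodule ≤ a₁.submodule ⊔ c₁.submodule := by
      have h' : b₂.submodule ≤
          (a₁.submodule ⊔ c₁.submodule) ⊓ (b₁.submodule ⊔ b₂.submodule) := by
        rw [heqM]; exact le_sup_right
      exact le_trans h' inf_le_left
    have hb₂U2 : b₂.submodule ≤ a₂.submodule ⊔ c₂.submodule := by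
      have hmem : b₂ ∈ mapSet χ (g ×ˢ ({P₂} : Set (PGPt F m))) :=
        mem_mapSet.2 ⟨(X.1, P₂), ⟨hXg, rfl⟩, hb₂⟩
      rw [h2eq] at hmem; exact hmem
    have hdisj : (a₁.submodule ⊔ c₁.submodule) ⊓ (a₂.submodule ⊔ c₂.submodule) = ⊥ := by
      apply inf_eq_bot_of_disjoint_lines
      rw [show {z : Projectivization K W | z.submodule ≤ a₁.submodule ⊔ c₁.submodule}
          = projLineThrough a₁ c₁ from rfl,
        show {z : Projectivization K W | z.submodule ≤ a₂.submodule ⊔ c₂.submodule}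
          = projLineThrough a₂ c₂ from rfl, ← h1eq, ← h2eq]
      exact hskew
    have : b₂.submodule ≤ ⊥ := by rw [← hdisj]; exact le_inf hb₂U1 hb₂U2
    exact submodule_ne_bot b₂ (le_bot_iff.1 this)
  have int02 : mapSet χ (g ×ˢ ({P₀} : Set (PGPt F m))) ∩
      mapSet χ (g ×ˢ ({P₂} : Set (PGPt F m))) = ∅ := by
    rw [Set.eq_empty_iff_forall_notMem]
    rintro u ⟨hu0, hu2⟩
    obtain ⟨X, hXmem, hXval⟩ := mem_mapSet.1 hu0
    obtain ⟨hXg, hXsnd⟩ := hXmem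
    obtain ⟨b₀, b₁, b₂, hb₀, hb₁, hb₂, hb12, hb01, hb02, hbleA, hbleB⟩ := fib X.1 hXg
    have hXeq : X = (X.1, P₀) := Prod.ext rfl hXsnd
    rw [hXeq] at hXval
    have hub : u = b₀ := Option.some_injective _ (hXval.symm.trans hb₀)
    subst hub
    have hu2' : u.submodule ≤ a₂.submodule ⊔ c₂.submodule := by
      rw [h2eq] at hu2; exact hu2
    have hb₂' : b₂.submodule ≤ a₂.submodule ⊔ c₂.submodule := by
      have hmem : b₂ ∈ mapSet χ (g ×ˢ ({P₂} : Set (PGPt F m))) :=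
        mem_mapSet.2 ⟨(X.1, P₂), ⟨hXg, rfl⟩, hb₂⟩
      rw [h2eq] at hmem; exact hmem
    have hbleA2 : u.submodule ≤ b₂.submodule ⊔ b₁.submodule := by
      rw [sup_comm]; exact hbleA
    have heqM : (a₂.submodule ⊔ c₂.submodule) ⊓ (b₂.submodule ⊔ b₁.submodule)
        = b₂.submodule ⊔ b₁.submodule :=
      eq_of_two_points_le hb02 inf_le_right (finrank_sup_eq_two hb12.symm).le
        (le_inf hu2' hbleA2) (le_inf hb₂' le_sup_left)
    have hb₁U2 : b₁.submodule ≤ a₂.submodule ⊔ c₂.submodule := by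
      have h' : b₁.submodule ≤
          (a₂.submodule ⊔ c₂.submodule) ⊓ (b₂.submodule ⊔ b₁.submodule) := by
        rw [heqM]; exact le_sup_right
      exact le_trans h' inf_le_left
    have hb₁U1 : b₁.submodule ≤ a₁.submodule ⊔ c₁.submodule := by
      have hmem : b₁ ∈ mapSet χ (g ×ˢ ({P₁} : Set (PGPt F m))) :=
        mem_mapSet.2 ⟨(X.1, P₁), ⟨hXg, rfl⟩, hb₁⟩
      rw [h1eq] at hmem; exact hmem
    have hdisj : (a₁.submodule ⊔ c₁.submodule) ⊓ (a₂.submodule ⊔ c₂.submodule) = ⊥ := by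
      apply inf_eq_bot_of_disjoint_lines
      rw [show {z : Projectivization K W | z.submodule ≤ a₁.submodule ⊔ c₁.submodule}
          = projLineThrough a₁ c₁ from rfl,
        show {z : Projectivization K W | z.submodule ≤ a₂.submodule ⊔ c₂.submodule}
          = projLineThrough a₂ c₂ from rfl, ← h1eq, ← h2eq]
      exact hskew
    have : b₁.submodule ≤ ⊥ := by rw [← hdisj]; exact le_inf hb₁U1 hb₁U2
    exact submodule_ne_bot b₁ (le_bot_iff.1 this)
  have ha₀m : a₀ ∈ mapSet χ (g ×ˢ ({P₀} : Set (PGPt F m))) :=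
    mem_mapSet.2 ⟨(xg, P₀), ⟨hxg, rfl⟩, ha₀⟩
  have ne01 : mapSet χ (g ×ˢ ({P₀} : Set (PGPt F m)))
      ≠ mapSet χ (g ×ˢ ({P₁} : Set (PGPt F m))) := by
    intro h
    have : a₀ ∈ mapSet χ (g ×ˢ ({P₀} : Set (PGPt F m))) ∩
        mapSet χ (g ×ˢ ({P₁} : Set (PGPt F m))) := ⟨ha₀m, by rw [← h]; exact ha₀m⟩
    rw [int01] at this
    exact this
  have ne02 : mapSet χ (g ×ˢ ({P₀} : Set (PGPt F m)))
      ≠ mapSet χ (g ×ˢ ({P₂} : Set (PGPt F m))) := by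
    intro h
    have : a₀ ∈ mapSet χ (g ×ˢ ({P₀} : Set (PGPt F m))) ∩
        mapSet χ (g ×ˢ ({P₂} : Set (PGPt F m))) := ⟨ha₀m, by rw [← h]; exact ha₀m⟩
    rw [int02] at this
    exact this
  have hd02 : (a₀.submodule ⊔ c₀.submodule) ⊓ (a₂.submodule ⊔ c₂.submodule) = ⊥ := by
    apply inf_eq_bot_of_disjoint_lines
    rw [show {z : Projectivization K W | z.submodule ≤ a₀.submodule ⊔ c₀.submodule}
        = projLineThrough a₀ c₀ from rfl,
      show {z : Projectivization K W | z.submodule ≤ a₂.submodule ⊔ c₂.submodule}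
        = projLineThrough a₂ c₂ from rfl, ← h0eq, ← h2eq]
    exact int02
  -- the uniqueness statement
  have uniq : ∀ P ∈ g, ∀ y₁ y₂ : Projectivization K W,
      χ (P, P₁) = some y₁ → χ (P, P₂) = some y₂ →
      mapSet χ (g ×ˢ ({P₂} : Set (PGPt F m))) ∩
        sJoin (projLines K W) ({y₁} : Set (Projectivization K W))
          (mapSet χ (g ×ˢ ({P₀} : Set (PGPt F m)))) = {y₂} := by
    intro R hR v₁ v₂ hv₁ hv₂
    obtain ⟨b₀, b₁, b₂, hb₀, hb₁, hb₂, hb12, hb01, hb02, hbleA, hbleB⟩ := fib R hR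
    have e1 : v₁ = b₁ := Option.some_injective _ (hv₁.symm.trans hb₁)
    have e2 : v₂ = b₂ := Option.some_injective _ (hv₂.symm.trans hb₂)
    subst e1; subst e2
    have hb₀N : b₀.submodule ≤ a₀.submodule ⊔ c₀.submodule := by
      have hmem : b₀ ∈ mapSet χ (g ×ˢ ({P₀} : Set (PGPt F m))) :=
        mem_mapSet.2 ⟨(R, P₀), ⟨hR, rfl⟩, hb₀⟩
      rw [h0eq] at hmem; exact hmem
    have hv₂U2 : v₂.submodule ≤ a₂.submodule ⊔ c₂.submodule := by
      have hmem : v₂ ∈ mapSet χ (g ×ˢ ({P₂} : Set (PGPt F m))) :=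
        mem_mapSet.2 ⟨(R, P₂), ⟨hR, rfl⟩, hb₂⟩
      rw [h2eq] at hmem; exact hmem
    have hv₂Pl : v₂.submodule ≤ v₁.submodule ⊔ (a₀.submodule ⊔ c₀.submodule) :=
      le_trans hbleB (sup_le le_sup_left (le_trans hb₀N le_sup_right))
    apply Set.eq_of_subset_of_subset
    · rintro z ⟨hz2, hzJ⟩
      have hzU2 : z.submodule ≤ a₂.submodule ⊔ c₂.submodule := by
        rw [h2eq] at hz2; exact hz2
      rcases mem_sJoin_single_left.1 hzJ with rfl | hzH | ⟨b, hbH, hneq, -, hzline⟩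
      · exfalso
        have hmem : z ∈ mapSet χ (g ×ˢ ({P₁} : Set (PGPt F m))) :=
          mem_mapSet.2 ⟨(R, P₁), ⟨hR, rfl⟩, hb₁⟩
        have : z ∈ mapSet χ (g ×ˢ ({P₁} : Set (PGPt F m))) ∩
            mapSet χ (g ×ˢ ({P₂} : Set (PGPt F m))) := ⟨hmem, hz2⟩
        rw [hskew] at this
        exact this
      · exfalso
        have : z ∈ mapSet χ (g ×ˢ ({P₀} : Set (PGPt F m))) ∩
            mapSet χ (g ×ˢ ({P₂} : Set (PGPt F m))) := ⟨hzH, hz2⟩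
        rw [int02] at this
        exact this
      · have hbN : b.submodule ≤ a₀.submodule ⊔ c₀.submodule := by
          rw [h0eq] at hbH; exact hbH
        rw [lineThru_proj hneq] at hzline
        have hzPl : z.submodule ≤ v₁.submodule ⊔ (a₀.submodule ⊔ c₀.submodule) :=
          le_trans hzline (sup_le le_sup_left (le_trans hbN le_sup_right))
        show z ∈ ({v₂} : Set (Projectivization K W))
        rw [Set.mem_singleton_iff]
        by_contra hzv
        have hX : (a₂.submodule ⊔ c₂.submodule) ⊓
            (v₁.submodule ⊔ (a₀.submodule ⊔ c₀.submodule))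
            = a₂.submodule ⊔ c₂.submodule :=
          eq_of_two_points_le hzv inf_le_left (finrank_sup_eq_two ne2).le
            (le_inf hzU2 hzPl) (le_inf hv₂U2 hv₂Pl)
        have hU2Pl : a₂.submodule ⊔ c₂.submodule ≤
            v₁.submodule ⊔ (a₀.submodule ⊔ c₀.submodule) := by
          rw [← hX]; exact inf_le_right
        have h4 : finrank K
            ↥((a₀.submodule ⊔ c₀.submodule) ⊔ (a₂.submodule ⊔ c₂.submodule)) = 4 := by
          have h := Submodule.finrank_sup_add_finrank_inf_eq
            (a₀.submodule ⊔ c₀.submodule) (a₂.submodule ⊔ c₂.submodule)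
          rw [hd02, finrank_bot, finrank_sup_eq_two ne0, finrank_sup_eq_two ne2] at h
          omega
        haveI : FiniteDimensional K ↥(v₁.submodule ⊔ (a₀.submodule ⊔ c₀.submodule)) :=
          Submodule.finiteDimensional_sup _ _
        have hge : (4 : ℕ) ≤ finrank K
            ↥(v₁.submodule ⊔ (a₀.submodule ⊔ c₀.submodule)) := by
          rw [← h4]
          exact Submodule.finrank_mono (sup_le le_sup_right hU2Pl)
        have hle3 : finrank K ↥(v₁.submodule ⊔ (a₀.submodule ⊔ c₀.submodule)) ≤ 3 := by
          have h := finrank_sup_le v₁.submodule (a₀.submodule ⊔ c₀.submodule)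
          rw [v₁.finrank_submodule, finrank_sup_eq_two ne0] at h
          omega
        omega
    · intro z hz
      rw [Set.mem_singleton_iff] at hz
      subst hz
      refine ⟨mem_mapSet.2 ⟨(R, P₂), ⟨hR, rfl⟩, hb₂⟩, ?_⟩
      apply mem_sJoin_single_left.2
      refine Or.inr (Or.inr ⟨b₀, mem_mapSet.2 ⟨(R, P₀), ⟨hR, rfl⟩, hb₀⟩,
        Ne.symm hb01, collin_proj (Ne.symm hb01), ?_⟩)
      rw [lineThru_proj (Ne.symm hb01)]
      exact hbleB
  -- construction of the linear map
  obtain ⟨D, hD⟩ := Submodule.exists_isCompl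
    ((a₀.submodule ⊔ c₀.submodule) ⊔ (a₂.submodule ⊔ c₂.submodule))
  have hC : IsCompl (a₂.submodule ⊔ c₂.submodule) ((a₀.submodule ⊔ c₀.submodule) ⊔ D) := by
    constructor
    · rw [disjoint_iff, eq_bot_iff]
      rintro x ⟨hxU, hxND⟩
      obtain ⟨nn, hn, d, hd, hsum⟩ := Submodule.mem_sup.1 hxND
      have hdmem : d ∈ (a₀.submodule ⊔ c₀.submodule) ⊔ (a₂.submodule ⊔ c₂.submodule) := by
        have : d = x - nn := by rw [← hsum]; abel
        rw [this]
        exact Submodule.sub_mem _ (Submodule.mem_sup_right hxU) (Submodule.mem_sup_left hn)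
      have hd0 : d = 0 := Submodule.disjoint_def.1 hD.disjoint d hdmem hd
      have hxN : x ∈ a₀.submodule ⊔ c₀.submodule := by
        rw [← hsum, hd0, add_zero]; exact hn
      have : x ∈ (a₀.submodule ⊔ c₀.submodule) ⊓ (a₂.submodule ⊔ c₂.submodule) :=
        ⟨hxN, hxU⟩
      rw [hd02] at this
      exact this
    · rw [codisjoint_iff]
      have hcod := codisjoint_iff.1 hD.codisjoint
      rw [← hcod, ← sup_assoc, sup_comm (a₂.submodule ⊔ c₂.submodule)
        (a₀.submodule ⊔ c₀.submodule)]
  set T : W →ₗ[K] W := (a₂.submodule ⊔ c₂.submodule).subtype.comp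
    (Submodule.projectionOnto (a₂.submodule ⊔ c₂.submodule)
      ((a₀.submodule ⊔ c₀.submodule) ⊔ D) hC) with hT
  have hTid : ∀ w ∈ a₂.submodule ⊔ c₂.submodule, T w = w := by
    intro w hw
    show ((a₂.submodule ⊔ c₂.submodule).subtype)
      (Submodule.projectionOnto _ _ hC w) = w
    have h := Submodule.projectionOnto_apply_left hC ⟨w, hw⟩
    rw [show ((⟨w, hw⟩ : ↥(a₂.submodule ⊔ c₂.submodule)) : W) = w from rfl] at h
    rw [h]
    rfl
  have hTzero : ∀ v ∈ a₀.submodule ⊔ c₀.submodule, T v = 0 := by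
    intro v hv
    show ((a₂.submodule ⊔ c₂.submodule).subtype)
      (Submodule.projectionOnto _ _ hC v) = 0
    rw [Submodule.projectionOnto_apply_of_mem_right hC (Submodule.mem_sup_left hv)]
    simp
  have hTpt : ∀ P ∈ g, ∀ y₁ y₂ : Projectivization K W,
      χ (P, P₁) = some y₁ → χ (P, P₂) = some y₂ →
      Submodule.map T y₁.submodule = y₂.submodule := by
    intro R hR v₁ v₂ hv₁ hv₂
    obtain ⟨b₀, b₁, b₂, hb₀, hb₁, hb₂, hb12, hb01, hb02, hbleA, hbleB⟩ := fib R hR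
    have e1 : v₁ = b₁ := Option.some_injective _ (hv₁.symm.trans hb₁)
    have e2 : v₂ = b₂ := Option.some_injective _ (hv₂.symm.trans hb₂)
    subst e1; subst e2
    have hb₀N : b₀.submodule ≤ a₀.submodule ⊔ c₀.submodule := by
      have hmem : b₀ ∈ mapSet χ (g ×ˢ ({P₀} : Set (PGPt F m))) :=
        mem_mapSet.2 ⟨(R, P₀), ⟨hR, rfl⟩, hb₀⟩
      rw [h0eq] at hmem; exact hmem
    have hv₂U2 : v₂.submodule ≤ a₂.submodule ⊔ c₂.submodule := by
      have hmem : v₂ ∈ mapSet χ (g ×ˢ ({P₂} : Set (PGPt F m))) :=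
        mem_mapSet.2 ⟨(R, P₂), ⟨hR, rfl⟩, hb₂⟩
      rw [h2eq] at hmem; exact hmem
    have hrepmem : v₂.rep ∈ v₁.submodule ⊔ (a₀.submodule ⊔ c₀.submodule) := by
      have h1' : v₂.rep ∈ v₂.submodule := by
        rw [Projectivization.submodule_eq]
        exact Submodule.mem_span_singleton_self _
      exact le_trans hbleB (sup_le le_sup_left (le_trans hb₀N le_sup_right)) h1'
    obtain ⟨p, hp, q, hq, hpq⟩ := Submodule.mem_sup.1 hrepmem
    rw [Projectivization.submodule_eq] at hp
    obtain ⟨a, ha⟩ := Submodule.mem_span_singleton.1 hp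
    have hTw : T v₂.rep = v₂.rep := by
      apply hTid
      apply hv₂U2
      rw [Projectivization.submodule_eq]
      exact Submodule.mem_span_singleton_self _
    have hcompute : v₂.rep = a • T v₁.rep := by
      rw [← hTw, ← hpq, map_add, hTzero q hq, add_zero, ← ha, map_smul]
    have hane : a ≠ 0 := by
      intro h
      rw [h, zero_smul] at hcompute
      exact v₂.rep_nonzero hcompute
    have hTv : T v₁.rep = a⁻¹ • v₂.rep := by
      rw [hcompute, smul_smul, inv_mul_cancel₀ hane, one_smul]
    rw [Projectivization.submodule_eq v₁, Projectivization.submodule_eq v₂,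
      Submodule.map_span, Set.image_singleton, hTv,
      Submodule.span_singleton_smul_eq (IsUnit.mk0 a⁻¹ (inv_ne_zero hane)) _]
  refine ⟨?_, ⟨int01, ne01⟩, ⟨int02, ne02⟩, uniq, ?_⟩
  · rw [h0eq]
    exact projLineThrough_mem ne0
  · refine ⟨T, ?_, hTpt⟩
    have sp1 : spanOf (mapSet χ (g ×ˢ ({P₁} : Set (PGPt F m))))
        = a₁.submodule ⊔ c₁.submodule := by
      apply le_antisymm
      · apply iSup₂_le
        intro x hx
        rw [h1eq] at hx
        exact hx
      · refine sup_le (le_iSup₂_of_le a₁ ?_ le_rfl) (le_iSup₂_of_le c₁ ?_ le_rfl)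
        · exact mem_mapSet.2 ⟨(xg, P₁), ⟨hxg, rfl⟩, ha₁⟩
        · exact mem_mapSet.2 ⟨(yg, P₁), ⟨hyg, rfl⟩, hc₁⟩
    have sp2 : spanOf (mapSet χ (g ×ˢ ({P₂} : Set (PGPt F m))))
        = a₂.submodule ⊔ c₂.submodule := by
      apply le_antisymm
      · apply iSup₂_le
        intro x hx
        rw [h2eq] at hx
        exact hx
      · refine sup_le (le_iSup₂_of_le a₂ ?_ le_rfl) (le_iSup₂_of_le c₂ ?_ le_rfl)
        · exact mem_mapSet.2 ⟨(xg, P₂), ⟨hxg, rfl⟩, ha₂⟩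
        · exact mem_mapSet.2 ⟨(yg, P₂), ⟨hyg, rfl⟩, hc₂⟩
    rw [sp1, sp2, Submodule.map_sup, hTpt xg hxg a₁ a₂ ha₁ ha₂, hTpt yg hyg c₁ c₂ hc₁ hc₂]
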